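/- Define the correlation P(a|q) for the m-player Hypercube game by P(a|q) = 1/2^{2^{m-1}-1} if (a,q) is consistent with a global assignment K : {0,1}^m → {±1} symmetric under flipping the first coordinate and the first player's parity condition ∏_{x: x₁=q₁} a₁(x) = (-1)^{q₁} holds, and P(a|q) = 0 otherwise. Then for every question q ∈ {0,1}^m, ∑_a P(a|q) = 1. -/
import Mathlib


open scoped Classical

noncomputable section StmtAux

namespace Stmt18Aux

def sgn (b : Bool) : ℝ := if b then 1 else -1

lemma sgn_or (b : Bool) : sgn b = 1 ∨ sgn b = -1 := by cases b <;> simp [sgn]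

lemma sgn_decide (r : ℝ) (hr : r = 1 ∨ r = -1) : sgn (decide (r = 1)) = r := by
  rcases hr with h | h <;> simp [h, sgn] <;> norm_num

lemma decide_sgn (b : Bool) : decide (sgn b = 1) = b := by
  cases b <;> simp [sgn] <;> norm_num

lemma prod_sgn_or {α : Type*} (s : Finset α) (g : α → Bool) :
    (∏ y ∈ s, sgn (g y)) = 1 ∨ (∏ y ∈ s, sgn (g y)) = -1 := by
  refine Finset.prod_induction _ (fun r => r = 1 ∨ r = -1) ?_ (Or.inl rfl) ?_
  · rintro a b (ha | ha) (hb | hb) <;> simp [ha, hb]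
  · intro a _; exact sgn_or _

variable {α : Type*} [Fintype α] [DecidableEq α]

/-- extend a function off `x₀` by value `b` at `x₀`. -/
def ext (x₀ : α) (h : {y : α // y ≠ x₀} → Bool) (b : Bool) : α → Bool :=
  fun y => if hy : y = x₀ then b else h ⟨y, hy⟩

lemma ext_self (x₀ : α) (h : {y : α // y ≠ x₀} → Bool) (b : Bool) :
    ext x₀ h b x₀ = b := by simp [ext]

lemma ext_ne (x₀ : α) (h : {y : α // y ≠ x₀} → Bool) (b : Bool) {y : α} (hy : y ≠ x₀) :
    ext x₀ h b y = h ⟨y, hy⟩ := by simp [ext, hy]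

def R (x₀ : α) (h : {y : α // y ≠ x₀} → Bool) : ℝ :=
  ∏ y ∈ Finset.univ.erase x₀, sgn (ext x₀ h true y)

lemma prod_ext (x₀ : α) (h : {y : α // y ≠ x₀} → Bool) (b : Bool) :
    (∏ y, sgn (ext x₀ h b y)) = sgn b * R x₀ h := by
  rw [← Finset.mul_prod_erase Finset.univ _ (Finset.mem_univ x₀), ext_self]
  congr 1
  refine Finset.prod_congr rfl fun y hy => ?_
  have hy' : y ≠ x₀ := (Finset.mem_erase.1 hy).1
  rw [ext_ne _ _ _ hy', ext_ne _ _ _ hy']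

lemma R_or (x₀ : α) (h : {y : α // y ≠ x₀} → Bool) : R x₀ h = 1 ∨ R x₀ h = -1 :=
  prod_sgn_or _ _

/-- The parity-constrained functions are equivalent to functions off one point. -/
def parityEquiv (x₀ : α) (c : ℝ) (hc : c = 1 ∨ c = -1) :
    {g : α → Bool // (∏ y, sgn (g y)) = c} ≃ ({y : α // y ≠ x₀} → Bool) where
  toFun g y := g.val y.val
  invFun h := ⟨ext x₀ h (decide (c * R x₀ h = 1)), by
    rw [prod_ext]
    have hR := R_or x₀ h
    have hcR : c * R x₀ h = 1 ∨ c * R x₀ h = -1 := by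
      rcases hc with h1 | h1 <;> rcases hR with h2 | h2 <;> simp [h1, h2]
    rw [sgn_decide _ hcR]
    rcases hR with h2 | h2 <;> rcases hc with h1 | h1 <;> rw [h1, h2] <;> ring⟩
  left_inv := by
    rintro ⟨g, hg⟩
    apply Subtype.ext
    show ext x₀ (fun z => g z.val) (decide (c * R x₀ (fun z => g z.val) = 1)) = g
    funext y
    by_cases hy : y = x₀
    · rw [hy, ext_self]
      have hR : R x₀ (fun z : {y // y ≠ x₀} => g z.val)
          = ∏ z ∈ Finset.univ.erase x₀, sgn (g z) := by
        refine Finset.prod_congr rfl fun z hz => ?_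
        rw [ext_ne _ _ _ (Finset.mem_erase.1 hz).1]
      have hsplit : sgn (g x₀) * ∏ z ∈ Finset.univ.erase x₀, sgn (g z) = c :=
        (Finset.mul_prod_erase Finset.univ (fun z => sgn (g z))
          (Finset.mem_univ x₀)).trans hg
      have hRR := prod_sgn_or (Finset.univ.erase x₀) g
      have hkey : c * R x₀ (fun z : {y // y ≠ x₀} => g z.val) = sgn (g x₀) := by
        rw [hR, ← hsplit]
        rcases hRR with h2 | h2 <;> rw [h2] <;> ring
      rw [hkey, decide_sgn]
    · rw [ext_ne _ _ _ hy]
  right_inv := by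
    intro h
    funext y
    show ext x₀ h (decide (c * R x₀ h = 1)) y.val = h y
    rw [ext_ne _ _ _ y.2]

/-- A facet of the Boolean cube is equivalent to functions off one coordinate. -/
def facetEquiv {ι : Type*} [DecidableEq ι] (i : ι) (b : Bool) :
    {x : ι → Bool // x i = b} ≃ ({j : ι // j ≠ i} → Bool) where
  toFun x j := x.val j.val
  invFun h := ⟨fun j => if hj : j = i then b else h ⟨j, hj⟩, by simp⟩
  left_inv x := Subtype.ext (funext fun j => by
    by_cases hj : j = i
    · subst hj; simp [x.2]
    · simp [hj])
  right_inv h := funext fun j => by simp [j.2]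

variable {m : ℕ} (e0 : Fin m) (q : Fin m → Bool)

def flipC (x : Fin m → Bool) : Fin m → Bool := Function.update x e0 (!(x e0))

lemma flipC_self (x : Fin m → Bool) : flipC e0 x e0 = !(x e0) := by simp [flipC]

lemma flipC_flipC (x : Fin m → Bool) : flipC e0 (flipC e0 x) = x := by
  funext j
  by_cases hj : j = e0
  · subst hj; simp [flipC]
  · simp [flipC, Function.update_of_ne hj]

lemma flipC_mem {x : Fin m → Bool} (h : ¬ x e0 = q e0) : flipC e0 x e0 = q e0 := by
  rw [flipC_self]
  revert h; cases hx : x e0 <;> cases hq : q e0 <;> simp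

/-- Global assignment built from a function on the facet. -/
def Kof (g : {x : Fin m → Bool // x e0 = q e0} → Bool) (x : Fin m → Bool) : Bool :=
  if h : x e0 = q e0 then g ⟨x, h⟩ else g ⟨flipC e0 x, flipC_mem e0 q h⟩

lemma Kof_facet (g : {x : Fin m → Bool // x e0 = q e0} → Bool)
    (x : {x : Fin m → Bool // x e0 = q e0}) : Kof e0 q g x.val = g x := by
  rw [Kof, dif_pos x.2]

lemma Kof_symm (g : {x : Fin m → Bool // x e0 = q e0} → Bool) (x : Fin m → Bool) :
    Kof e0 q g x = Kof e0 q g (flipC e0 x) := by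
  by_cases h : x e0 = q e0
  · have h2 : ¬ flipC e0 x e0 = q e0 := by
      rw [flipC_self, ← h]; cases x e0 <;> simp
    rw [Kof, Kof, dif_pos h, dif_neg h2]
    congr 1
    exact Subtype.ext (flipC_flipC e0 x).symm
  · have h2 : flipC e0 x e0 = q e0 := flipC_mem e0 q h
    rw [Kof, Kof, dif_neg h, dif_pos h2]

end Stmt18Aux

open Stmt18Aux in
theorem stmt18_aux (m : ℕ) (hm : 2 ≤ m) (e0 : Fin m) (q : Fin m → Bool) :
    (∑ a : (∀ i : Fin m, {x : Fin m → Bool // x i = q i} → Bool),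
      if (∃ K : (Fin m → Bool) → Bool,
            (∀ x : Fin m → Bool,
              K x = K (Function.update x e0 (!(x e0)))) ∧
            (∀ i : Fin m, ∀ x : {x : Fin m → Bool // x i = q i}, a i x = K x.val)) ∧
          (∏ x : {x : Fin m → Bool // x e0 = q e0},
              (if a e0 x then (1 : ℝ) else -1)) =
            (if q e0 then -1 else 1)
      then (1 : ℝ) / 2 ^ (2 ^ (m - 1) - 1) else 0) = 1 := by
  classical
  set c : ℝ := if q e0 then -1 else 1 with hcdef
  have hc : c = 1 ∨ c = -1 := by by_cases h : q e0 <;> simp [hcdef, h]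
  -- equivalence between valid answers and parity-constrained facet functions
  have E1 : {a : (∀ i : Fin m, {x : Fin m → Bool // x i = q i} → Bool) //
      (∃ K : (Fin m → Bool) → Bool,
            (∀ x : Fin m → Bool,
              K x = K (Function.update x e0 (!(x e0)))) ∧
            (∀ i : Fin m, ∀ x : {x : Fin m → Bool // x i = q i}, a i x = K x.val)) ∧
          (∏ x : {x : Fin m → Bool // x e0 = q e0},
              (if a e0 x then (1 : ℝ) else -1)) = c} ≃
      {g : {x : Fin m → Bool // x e0 = q e0} → Bool // (∏ y, sgn (g y)) = c} := by
    refine ⟨fun a => ⟨a.val e0, ?_⟩, fun g => ⟨fun i x => Kof e0 q g.val x.val, ?_⟩, ?_, ?_⟩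
    · refine Eq.trans ?_ a.2.2
      exact Finset.prod_congr rfl fun x _ => rfl
    · refine ⟨⟨Kof e0 q g.val, fun x => Kof_symm e0 q g.val x, fun i x => rfl⟩, ?_⟩
      refine Eq.trans ?_ g.2
      refine Finset.prod_congr rfl fun x _ => ?_
      show (if Kof e0 q g.val x.val then (1 : ℝ) else -1) = sgn (g.val x)
      rw [Kof_facet e0 q g.val x]
      rfl
    · rintro ⟨a, ⟨⟨K, hKsym, hKcons⟩, hpar⟩⟩
      apply Subtype.ext
      funext i x
      show Kof e0 q (a e0) x.val = a i x
      have hK : ∀ x' : Fin m → Bool, Kof e0 q (a e0) x' = K x' := by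
        intro x'
        by_cases h : x' e0 = q e0
        · rw [Kof, dif_pos h, hKcons e0 ⟨x', h⟩]
        · rw [Kof, dif_neg h, hKcons e0 ⟨flipC e0 x', flipC_mem e0 q h⟩]
          exact (hKsym x').symm
      rw [hK, hKcons i x]
    · intro g
      apply Subtype.ext
      funext x
      show Kof e0 q g.val x.val = g.val x
      exact Kof_facet e0 q g.val x
  -- nonemptiness of the facet
  have x₀ : {x : Fin m → Bool // x e0 = q e0} := ⟨q, rfl⟩
  have E2 := parityEquiv x₀ c hc
  -- cardinality computations
  have hfc : Fintype.card {x : Fin m → Bool // x e0 = q e0} = 2 ^ (m - 1) := by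
    rw [Fintype.card_congr (facetEquiv e0 (q e0)), Fintype.card_fun]
    congr 1
    simp [Fintype.card_subtype_compl]
  have hcard : Fintype.card {a : (∀ i : Fin m, {x : Fin m → Bool // x i = q i} → Bool) //
      (∃ K : (Fin m → Bool) → Bool,
            (∀ x : Fin m → Bool,
              K x = K (Function.update x e0 (!(x e0)))) ∧
            (∀ i : Fin m, ∀ x : {x : Fin m → Bool // x i = q i}, a i x = K x.val)) ∧
          (∏ x : {x : Fin m → Bool // x e0 = q e0},
              (if a e0 x then (1 : ℝ) else -1)) = c} = 2 ^ (2 ^ (m - 1) - 1) := by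
    rw [Fintype.card_congr (E1.trans E2), Fintype.card_fun]
    simp [Fintype.card_subtype_compl, hfc]
  rw [Finset.sum_ite, Finset.sum_const, Finset.sum_const_zero, add_zero, nsmul_eq_mul,
    ← Fintype.card_subtype]
  rw [hcard]
  have h2 : (2 : ℝ) ^ (2 ^ (m - 1) - 1) ≠ 0 := by positivity
  push_cast
  field_simp

end StmtAux

theorem stmt_18 (m : ℕ) (hm : 2 ≤ m) (q : Fin m → Bool) :
    (∑ a : (∀ i : Fin m, {x : Fin m → Bool // x i = q i} → Bool),
      if (∃ K : (Fin m → Bool) → Bool,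
            -- K is symmetric under flipping the first coordinate
            (∀ x : Fin m → Bool,
              K x = K (Function.update x ⟨0, by omega⟩ (!(x ⟨0, by omega⟩)))) ∧
            -- every player's answer is consistent with the global assignment K
            (∀ i : Fin m, ∀ x : {x : Fin m → Bool // x i = q i}, a i x = K x.val)) ∧
          -- the first player's parity condition: product over the facet x₁ = q₁
          (∏ x : {x : Fin m → Bool // x ⟨0, by omega⟩ = q ⟨0, by omega⟩},
              (if a ⟨0, by omega⟩ x then (1 : ℝ) else -1)) =
            (if q ⟨0, by omega⟩ then -1 else 1)
      then (1 : ℝ) / 2 ^ (2 ^ (m - 1) - 1) else 0) = 1 :=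
  stmt18_aux m hm ⟨0, by omega⟩ q
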